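/- For all natural numbers n, ∑_{j=0}^{n} j^4 · binomial(2n, n-j) = 2^(2n-3) · n · (3n-1); equivalently, 8·∑_{j=0}^{n} j^4·binomial(2n, n-j) = 4^n·n·(3n-1). -/

import Mathlib

open Finset

private lemma pascal_sum (m : ℕ) (f : ℕ → ℤ) :
    ∑ k ∈ range (m + 1 + 1), f k * (Nat.choose (m + 1) k : ℤ) =
      ∑ k ∈ range (m + 1), (f k + f (k + 1)) * (Nat.choose m k : ℤ) := by
  rw [Finset.sum_range_succ' (fun k => f k * (Nat.choose (m + 1) k : ℤ)) (m + 1)]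
  have h1 : ∀ i, (Nat.choose (m + 1) (i + 1) : ℤ) =
      (Nat.choose m i : ℤ) + (Nat.choose m (i + 1) : ℤ) := by
    intro i
    rw [Nat.choose_succ_succ]
    push_cast; ring
  have h2 : ∑ i ∈ range (m + 1), f (i + 1) * (Nat.choose (m + 1) (i + 1) : ℤ) =
      ∑ i ∈ range (m + 1), f (i + 1) * (Nat.choose m i : ℤ) +
        ∑ i ∈ range (m + 1), f (i + 1) * (Nat.choose m (i + 1) : ℤ) := by
    rw [← Finset.sum_add_distrib]
    refine Finset.sum_congr rfl fun i _ => ?_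
    rw [h1]; ring
  have h3 : ∑ i ∈ range (m + 1), f (i + 1) * (Nat.choose m (i + 1) : ℤ) =
      ∑ i ∈ range (m + 1), f i * (Nat.choose m i : ℤ) - f 0 * (Nat.choose m 0 : ℤ) := by
    have := Finset.sum_range_succ' (fun k => f k * (Nat.choose m k : ℤ)) (m + 1)
    have hz : (Nat.choose m (m + 1) : ℤ) = 0 := by
      norm_cast
      exact Nat.choose_eq_zero_of_lt (by omega)
    rw [Finset.sum_range_succ (fun k => f k * (Nat.choose m k : ℤ)) (m + 1), hz] at this
    simp only [mul_zero, add_zero] at this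
    linarith [this]
  rw [h2, h3]
  have h4 : ∑ k ∈ range (m + 1), (f k + f (k + 1)) * (Nat.choose m k : ℤ) =
      ∑ k ∈ range (m + 1), f k * (Nat.choose m k : ℤ) +
        ∑ k ∈ range (m + 1), f (k + 1) * (Nat.choose m k : ℤ) := by
    rw [← Finset.sum_add_distrib]
    refine Finset.sum_congr rfl fun i _ => ?_
    ring
  rw [h4]
  simp [Nat.choose_zero_right]
  ring

private lemma moment0 (m : ℕ) : ∑ k ∈ range (m + 1), (Nat.choose m k : ℤ) = 2 ^ m := by
  exact_mod_cast congrArg (Nat.cast : ℕ → ℤ) (Nat.sum_range_choose m)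

private lemma moment2 (m : ℕ) :
    ∑ k ∈ range (m + 1), (2 * (k : ℤ) - (m : ℤ)) ^ 2 * (Nat.choose m k : ℤ)
      = (m : ℤ) * 2 ^ m := by
  induction m with
  | zero => norm_num
  | succ m ih =>
    have key := pascal_sum m (fun k => (2 * (k : ℤ) - ((m : ℤ) + 1)) ^ 2)
    have goalcast : ∑ k ∈ range (m + 1 + 1),
        (2 * (k : ℤ) - ((m + 1 : ℕ) : ℤ)) ^ 2 * (Nat.choose (m + 1) k : ℤ)
        = ∑ k ∈ range (m + 1 + 1),
          (2 * (k : ℤ) - ((m : ℤ) + 1)) ^ 2 * (Nat.choose (m + 1) k : ℤ) := by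
      refine Finset.sum_congr rfl fun k _ => ?_
      push_cast; ring
    rw [goalcast, key]
    have split : ∑ k ∈ range (m + 1),
        ((2 * (k : ℤ) - ((m : ℤ) + 1)) ^ 2 + (2 * ((k + 1 : ℕ) : ℤ) - ((m : ℤ) + 1)) ^ 2)
          * (Nat.choose m k : ℤ)
        = 2 * ∑ k ∈ range (m + 1), (2 * (k : ℤ) - (m : ℤ)) ^ 2 * (Nat.choose m k : ℤ)
          + 2 * ∑ k ∈ range (m + 1), (Nat.choose m k : ℤ) := by
      rw [Finset.mul_sum, Finset.mul_sum, ← Finset.sum_add_distrib]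
      refine Finset.sum_congr rfl fun k _ => ?_
      push_cast; ring
    rw [split, ih, moment0]
    push_cast; ring

private lemma moment4 (m : ℕ) :
    ∑ k ∈ range (m + 1), (2 * (k : ℤ) - (m : ℤ)) ^ 4 * (Nat.choose m k : ℤ)
      = (m : ℤ) * (3 * (m : ℤ) - 2) * 2 ^ m := by
  induction m with
  | zero => norm_num
  | succ m ih =>
    have key := pascal_sum m (fun k => (2 * (k : ℤ) - ((m : ℤ) + 1)) ^ 4)
    have goalcast : ∑ k ∈ range (m + 1 + 1),
        (2 * (k : ℤ) - ((m + 1 : ℕ) : ℤ)) ^ 4 * (Nat.choose (m + 1) k : ℤ)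
        = ∑ k ∈ range (m + 1 + 1),
          (2 * (k : ℤ) - ((m : ℤ) + 1)) ^ 4 * (Nat.choose (m + 1) k : ℤ) := by
      refine Finset.sum_congr rfl fun k _ => ?_
      push_cast; ring
    rw [goalcast, key]
    have split : ∑ k ∈ range (m + 1),
        ((2 * (k : ℤ) - ((m : ℤ) + 1)) ^ 4 + (2 * ((k + 1 : ℕ) : ℤ) - ((m : ℤ) + 1)) ^ 4)
          * (Nat.choose m k : ℤ)
        = 2 * ∑ k ∈ range (m + 1), (2 * (k : ℤ) - (m : ℤ)) ^ 4 * (Nat.choose m k : ℤ)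
          + 12 * ∑ k ∈ range (m + 1), (2 * (k : ℤ) - (m : ℤ)) ^ 2 * (Nat.choose m k : ℤ)
          + 2 * ∑ k ∈ range (m + 1), (Nat.choose m k : ℤ) := by
      rw [Finset.mul_sum, Finset.mul_sum, Finset.mul_sum, ← Finset.sum_add_distrib,
        ← Finset.sum_add_distrib]
      refine Finset.sum_congr rfl fun k _ => ?_
      push_cast; ring
    rw [split, ih, moment2, moment0]
    push_cast; ring

theorem sum_choose_B4 (n : ℕ) :
    8 * ∑ j ∈ Finset.range (n + 1), j ^ 4 * Nat.choose (2 * n) (n - j) =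
      4 ^ n * n * (3 * n - 1) := by
  rcases Nat.eq_zero_or_pos n with hn | hn
  · subst hn; decide
  have hS : ((∑ j ∈ Finset.range (n + 1), j ^ 4 * Nat.choose (2 * n) (n - j) : ℕ) : ℤ)
      = ∑ k ∈ range (n + 1), ((n : ℤ) - k) ^ 4 * (Nat.choose (2 * n) k : ℤ) := by
    push_cast
    rw [← Finset.sum_range_reflect
      (fun j => (j : ℤ) ^ 4 * (Nat.choose (2 * n) (n - j) : ℤ)) (n + 1)]
    refine Finset.sum_congr rfl fun k hk => ?_
    rw [Finset.mem_range] at hk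
    have hk' : k ≤ n := by omega
    have e1 : n + 1 - 1 - k = n - k := by omega
    have e2 : n - (n - k) = k := by omega
    simp only [e1, e2]
    have h2 : ((n - k : ℕ) : ℤ) = (n : ℤ) - k := by omega
    rw [h2]
  set h : ℕ → ℤ := fun k => ((n : ℤ) - k) ^ 4 * (Nat.choose (2 * n) k : ℤ) with hh
  have hF : ∑ k ∈ range (2 * n + 1), h k = 2 * ∑ k ∈ range (n + 1), h k := by
    have hsplit : range (2 * n + 1) = range (n + 1) ∪ Finset.Ico (n + 1) (2 * n + 1) := by
      rw [Finset.range_eq_Ico, Finset.range_eq_Ico]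
      exact (Finset.Ico_union_Ico_eq_Ico (a := 0) (b := n + 1) (c := 2 * n + 1) (by omega) (by omega)).symm
    rw [hsplit, Finset.sum_union (by
      rw [Finset.range_eq_Ico]
      exact Finset.Ico_disjoint_Ico_consecutive 0 (n + 1) (2 * n + 1))]
    have hIco : ∑ k ∈ Finset.Ico (n + 1) (2 * n + 1), h k = ∑ i ∈ range n, h (n + 1 + i) := by
      rw [Finset.sum_Ico_eq_sum_range]
      have : 2 * n + 1 - (n + 1) = n := by omega
      rw [this]
    rw [hIco, ← Finset.sum_range_reflect (fun i => h (n + 1 + i)) n]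
    have hrefl : ∑ i ∈ range n, h (n + 1 + (n - 1 - i)) = ∑ i ∈ range n, h i := by
      refine Finset.sum_congr rfl fun i hi => ?_
      rw [Finset.mem_range] at hi
      have h1 : n + 1 + (n - 1 - i) = 2 * n - i := by omega
      rw [h1, hh]
      simp only
      have h2 : Nat.choose (2 * n) (2 * n - i) = Nat.choose (2 * n) i :=
        Nat.choose_symm (by omega)
      rw [h2]
      have h3 : ((2 * n - i : ℕ) : ℤ) = 2 * (n : ℤ) - i := by omega
      rw [h3]
      ring
    rw [hrefl]
    have hlast : ∑ k ∈ range (n + 1), h k = ∑ i ∈ range n, h i + h n :=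
      Finset.sum_range_succ h n
    have hn0 : h n = 0 := by rw [hh]; simp
    rw [hlast, hn0]
    ring
  have hM := moment4 (2 * n)
  have h16 : ∑ k ∈ range (2 * n + 1), (2 * (k : ℤ) - ((2 * n : ℕ) : ℤ)) ^ 4
        * (Nat.choose (2 * n) k : ℤ)
      = 16 * ∑ k ∈ range (2 * n + 1), h k := by
    rw [Finset.mul_sum]
    refine Finset.sum_congr rfl fun k _ => ?_
    rw [hh]
    push_cast
    ring
  rw [h16, hF] at hM
  have key : 8 * ((∑ j ∈ Finset.range (n + 1), j ^ 4 * Nat.choose (2 * n) (n - j) : ℕ) : ℤ)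
      = ((4 ^ n * n * (3 * n - 1) : ℕ) : ℤ) := by
    rw [hS]
    push_cast [Nat.cast_sub (by omega : 1 ≤ 3 * n)] at hM ⊢
    have h2p : (2 : ℤ) ^ (2 * n) = 4 ^ n := by
      rw [pow_mul]; norm_num
    rw [h2p] at hM
    linarith [hM]
  exact_mod_cast key
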